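/- Let X be a finite or countable set and χ_A = (1/|A|)·1_A ∈ ℓ¹(X) the normalized characteristic function of a finite nonempty set A. Then for finite nonempty A,B ⊆ X, ‖χ_A − χ_B‖₁ ≤ 2(1 − |A∩B| / |A∪B|). -/

import Mathlib

lemma stmt11_aux {X : Type*} [Countable X] [DecidableEq X]
    (A B : Finset X) (hA : A.Nonempty) (hB : B.Nonempty) (hab : B.card ≤ A.card) :
    ∑' x : X,
      |(if x ∈ A then ((A.card : ℝ))⁻¹ else 0) - (if x ∈ B then ((B.card : ℝ))⁻¹ else 0)|
      ≤ 2 * (1 - ((A ∩ B).card : ℝ) / ((A ∪ B).card : ℝ)) := by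
  have ha0 : (0:ℝ) < A.card := by exact_mod_cast hA.card_pos
  have hb0 : (0:ℝ) < B.card := by exact_mod_cast hB.card_pos
  have hu0 : (0:ℝ) < ((A ∪ B).card : ℝ) := by
    exact_mod_cast (hA.mono Finset.subset_union_left).card_pos
  have hba : (B.card:ℝ) ≤ A.card := by exact_mod_cast hab
  have hinv : (A.card:ℝ)⁻¹ ≤ (B.card:ℝ)⁻¹ := by
    apply inv_anti₀ hb0 hba
  set f : X → ℝ := fun x =>
    |(if x ∈ A then ((A.card : ℝ))⁻¹ else 0) - (if x ∈ B then ((B.card : ℝ))⁻¹ else 0)| with hfdef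
  have hsum : ∑' x : X, f x = ∑ x ∈ A ∪ B, f x := by
    apply tsum_eq_sum
    intro x hx
    rw [Finset.mem_union] at hx
    push_neg at hx
    simp [f, hx.1, hx.2]
  have hdecomp : A ∪ B = (A \ B) ∪ B := (Finset.sdiff_union_self_eq_union).symm
  have hdecompB : B = (B \ A) ∪ (B ∩ A) := (Finset.sdiff_union_inter B A).symm
  have h1 : ∑ x ∈ A \ B, f x = ((A \ B).card : ℝ) * (A.card:ℝ)⁻¹ := by
    rw [Finset.sum_congr rfl (fun x hx => ?_), Finset.sum_const, nsmul_eq_mul]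
    rw [Finset.mem_sdiff] at hx
    simp only [f, hx.1, hx.2, if_true, if_false, sub_zero]
    exact abs_of_nonneg (inv_nonneg.mpr ha0.le)
  have h2 : ∑ x ∈ B \ A, f x = ((B \ A).card : ℝ) * (B.card:ℝ)⁻¹ := by
    rw [Finset.sum_congr rfl (fun x hx => ?_), Finset.sum_const, nsmul_eq_mul]
    rw [Finset.mem_sdiff] at hx
    simp only [f, hx.1, hx.2, if_true, if_false, zero_sub, abs_neg]
    exact abs_of_nonneg (inv_nonneg.mpr hb0.le)
  have h3 : ∑ x ∈ B ∩ A, f x = ((B ∩ A).card : ℝ) * ((B.card:ℝ)⁻¹ - (A.card:ℝ)⁻¹) := by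
    rw [Finset.sum_congr rfl (fun x hx => ?_), Finset.sum_const, nsmul_eq_mul]
    rw [Finset.mem_inter] at hx
    simp only [f, hx.1, hx.2, if_true]
    rw [abs_sub_comm]
    exact abs_of_nonneg (by linarith)
  have hdisj1 : Disjoint (A \ B) B := Finset.sdiff_disjoint
  have hdisj2 : Disjoint (B \ A) (B ∩ A) := by
    exact Finset.disjoint_left.mpr (fun x hx hx2 => (Finset.mem_sdiff.mp hx).2 (Finset.mem_inter.mp hx2).2)
  have hsum2 : ∑ x ∈ A ∪ B, f x =
      ((A \ B).card : ℝ) * (A.card:ℝ)⁻¹ + (((B \ A).card : ℝ) * (B.card:ℝ)⁻¹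
        + ((B ∩ A).card : ℝ) * ((B.card:ℝ)⁻¹ - (A.card:ℝ)⁻¹)) := by
    rw [hdecomp, Finset.sum_union hdisj1, h1]
    congr 1
    rw [hdecompB, Finset.sum_union hdisj2, h2, h3]
    rw [← hdecompB]
  -- card identities
  have hcAB : ((A \ B).card : ℝ) = (A.card : ℝ) - ((A ∩ B).card : ℝ) := by
    have := Finset.card_sdiff_add_card_inter A B
    push_cast [← this]; ring
  have hcBA : ((B \ A).card : ℝ) = (B.card : ℝ) - ((A ∩ B).card : ℝ) := by
    have := Finset.card_sdiff_add_card_inter B A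
    rw [Finset.inter_comm] at this
    push_cast [← this]; ring
  have hcI : ((B ∩ A).card : ℝ) = ((A ∩ B).card : ℝ) := by rw [Finset.inter_comm]
  have hau : (A.card : ℝ) ≤ ((A ∪ B).card : ℝ) := by
    exact_mod_cast Finset.card_le_card Finset.subset_union_left
  have hi0 : (0:ℝ) ≤ ((A ∩ B).card : ℝ) := Nat.cast_nonneg _
  have key : ∑ x ∈ A ∪ B, f x = 2 - 2 * (((A ∩ B).card : ℝ) / (A.card : ℝ)) := by
    rw [hsum2, hcAB, hcBA, hcI]
    have e1 := mul_inv_cancel₀ ha0.ne'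
    have e2 := mul_inv_cancel₀ hb0.ne'
    rw [div_eq_mul_inv]
    linear_combination e1 + e2
  rw [hsum, key]
  have : ((A ∩ B).card : ℝ) / ((A ∪ B).card : ℝ) ≤ ((A ∩ B).card : ℝ) / (A.card : ℝ) :=
    div_le_div_of_nonneg_left hi0 ha0 hau
  linarith

theorem stmt11 {X : Type*} [Countable X] [DecidableEq X]
    (A B : Finset X) (hA : A.Nonempty) (hB : B.Nonempty) :
    ∑' x : X,
      |(if x ∈ A then ((A.card : ℝ))⁻¹ else 0) - (if x ∈ B then ((B.card : ℝ))⁻¹ else 0)|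
      ≤ 2 * (1 - ((A ∩ B).card : ℝ) / ((A ∪ B).card : ℝ)) := by
  rcases le_total B.card A.card with h | h
  · exact stmt11_aux A B hA hB h
  · have := stmt11_aux B A hB hA h
    rw [Finset.inter_comm, Finset.union_comm] at this
    calc ∑' x : X, |(if x ∈ A then ((A.card : ℝ))⁻¹ else 0) - (if x ∈ B then ((B.card : ℝ))⁻¹ else 0)|
        = ∑' x : X, |(if x ∈ B then ((B.card : ℝ))⁻¹ else 0) - (if x ∈ A then ((A.card : ℝ))⁻¹ else 0)| := by
          apply tsum_congr; intro x; rw [abs_sub_comm]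
      _ ≤ _ := this
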